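/- For every ε with 0 < ε < min(1/4, (a+1)/2), and with K_ε(s,t) = (θ(s)·θ(t))^{-ε}/(φ(s)·φ(t))^{1/2} · (θ(s)/θ(t))^{a/2 + 1/4}, where a > -1, φ(t) is comparable to √t and θ(t) is comparable to t near 0 (and both bounded above and below on [δ,1] for δ > 0), one has ∫_0^1 ∫_0^t K_ε(s,t)² ds dt < ∞. -/

import Mathlib

open MeasureTheory Real Set

lemma sq_rpow_aux {b : ℝ} (hb : 0 ≤ b) (e : ℝ) : (b ^ e) ^ 2 = b ^ (2 * e) := by
  rw [← Real.rpow_natCast (b ^ e) 2, ← Real.rpow_mul hb]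
  norm_num [mul_comm]

lemma aux_lint (p : ℝ) (hp : -1 < p) (t : ℝ) (ht : 0 < t) :
    ∫⁻ s in Set.Ioc (0:ℝ) t, ENNReal.ofReal (s ^ p) =
      ENNReal.ofReal (t ^ (p+1) / (p+1)) := by
  have hint : IntegrableOn (fun s : ℝ => s ^ p) (Set.Ioc 0 t) := by
    have := intervalIntegral.intervalIntegrable_rpow' (a := 0) (b := t) hp
    rwa [intervalIntegrable_iff_integrableOn_Ioc_of_le ht.le] at this
  rw [← ofReal_integral_eq_lintegral_ofReal hint ?_]
  · congr 1
    rw [← intervalIntegral.integral_of_le ht.le, integral_rpow (Or.inl hp)]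
    rw [Real.zero_rpow (by linarith)]
    ring
  · filter_upwards [ae_restrict_mem measurableSet_Ioc] with s hs
    exact Real.rpow_nonneg hs.1.le _

lemma ptbound (a ε c s t x y u v : ℝ) (hc : 1 ≤ c) (hε : 0 < ε)
    (hs : 0 < s) (hst : s ≤ t)
    (hx1 : c⁻¹ * s ≤ x) (hx2 : x ≤ c * s)
    (hy1 : c⁻¹ * t ≤ y) (hy2 : y ≤ c * t)
    (hu : c⁻¹ * Real.sqrt s ≤ u) (hv : c⁻¹ * Real.sqrt t ≤ v) :
    ((x * y) ^ (-ε) / (u * v) ^ ((1:ℝ)/2) * (x / y) ^ (a/2 + 1/4)) ^ 2 ≤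
      ((c^2) ^ (2*ε) * c^2 * (c^2) ^ |a + 1/2|) * s ^ (a - 2*ε) * t ^ (-(a+1) - 2*ε) := by
  have hc0 : (0:ℝ) < c := lt_of_lt_of_le one_pos hc
  have ht : 0 < t := hs.trans_le hst
  have hx : 0 < x := lt_of_lt_of_le (by positivity) hx1
  have hy : 0 < y := lt_of_lt_of_le (by positivity) hy1
  have hu0 : 0 < u := lt_of_lt_of_le (by positivity) hu
  have hv0 : 0 < v := lt_of_lt_of_le (by positivity) hv
  have hc2 : (1:ℝ) ≤ c^2 := one_le_pow₀ hc
  set r : ℝ := a + 1/2 with hr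
  have hsq : ((x * y) ^ (-ε) / (u * v) ^ ((1:ℝ)/2) * (x / y) ^ (a/2 + 1/4)) ^ 2
      = (x*y) ^ (-(2*ε)) / (u*v) * (x/y) ^ r := by
    have h1 : ((x*y) ^ (-ε))^2 = (x*y) ^ (-(2*ε)) := by
      rw [sq_rpow_aux (by positivity)]; ring_nf
    have h2 : (((u*v) ^ ((1:ℝ)/2)))^2 = u*v := by
      rw [sq_rpow_aux (by positivity)]; norm_num
    have h3 : ((x/y) ^ (a/2 + 1/4))^2 = (x/y) ^ r := by
      rw [sq_rpow_aux (by positivity)]; congr 1; rw [hr]; ring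
    rw [mul_pow, div_pow, h1, h2, h3]
  rw [hsq]
  have hA : (x*y) ^ (-(2*ε)) ≤ (c^2) ^ (2*ε) * (s*t) ^ (-(2*ε)) := by
    have hlow : (c^2)⁻¹ * (s*t) ≤ x*y := by
      calc (c^2)⁻¹ * (s*t) = (c⁻¹*s) * (c⁻¹*t) := by field_simp
        _ ≤ x * y := mul_le_mul hx1 hy1 (by positivity) hx.le
    have := Real.rpow_le_rpow_of_nonpos (by positivity) hlow (by linarith : -(2*ε) ≤ 0)
    calc (x*y) ^ (-(2*ε)) ≤ ((c^2)⁻¹ * (s*t)) ^ (-(2*ε)) := this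
      _ = (c^2) ^ (2*ε) * (s*t) ^ (-(2*ε)) := by
          rw [Real.mul_rpow (by positivity) (by positivity),
            Real.inv_rpow (by positivity), ← Real.rpow_neg (by positivity), neg_neg]
  have hB : c⁻¹ * Real.sqrt s * (c⁻¹ * Real.sqrt t) ≤ u * v :=
    mul_le_mul hu hv (by positivity) hu0.le
  have hD : (x/y) ^ r ≤ (c^2) ^ |r| * (s/t) ^ r := by
    rcases le_or_gt 0 r with hr0 | hr0
    · have hxy : x/y ≤ c^2 * (s/t) := by
        rw [div_le_iff₀ hy]
        calc x ≤ c * s := hx2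
          _ = (c^2 * (s/t)) * (c⁻¹ * t) := by field_simp
          _ ≤ (c^2 * (s/t)) * y := by
              apply mul_le_mul_of_nonneg_left hy1 (by positivity)
      calc (x/y) ^ r ≤ (c^2 * (s/t)) ^ r :=
            Real.rpow_le_rpow (by positivity) hxy hr0
        _ = (c^2) ^ r * (s/t) ^ r := Real.mul_rpow (by positivity) (by positivity)
        _ = (c^2) ^ |r| * (s/t) ^ r := by rw [abs_of_nonneg hr0]
    · have hxy : (c^2)⁻¹ * (s/t) ≤ x/y := by
        rw [le_div_iff₀ hy]
        calc (c^2)⁻¹ * (s/t) * y ≤ (c^2)⁻¹ * (s/t) * (c*t) := by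
              apply mul_le_mul_of_nonneg_left hy2 (by positivity)
          _ = c⁻¹ * s := by field_simp
          _ ≤ x := hx1
      calc (x/y) ^ r ≤ ((c^2)⁻¹ * (s/t)) ^ r :=
            Real.rpow_le_rpow_of_nonpos (by positivity) hxy hr0.le
        _ = ((c^2)⁻¹) ^ r * (s/t) ^ r := Real.mul_rpow (by positivity) (by positivity)
        _ = (c^2) ^ |r| * (s/t) ^ r := by
            rw [abs_of_neg hr0, Real.inv_rpow (by positivity),
              ← Real.rpow_neg (by positivity)]
  have step : (x*y) ^ (-(2*ε)) / (u*v) * (x/y) ^ r ≤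
      ((c^2) ^ (2*ε) * (s*t) ^ (-(2*ε))) / (c⁻¹ * Real.sqrt s * (c⁻¹ * Real.sqrt t))
        * ((c^2) ^ |r| * (s/t) ^ r) := by
    apply mul_le_mul _ hD (by positivity) (by positivity)
    exact div_le_div₀ (by positivity) hA (by positivity) hB
  refine step.trans_eq ?_
  have es : s ^ (-(2*ε)) * (s ^ ((1:ℝ)/2))⁻¹ * s ^ r = s ^ (a - 2*ε) := by
    rw [← Real.rpow_neg hs.le, ← Real.rpow_add hs, ← Real.rpow_add hs]
    congr 1; rw [hr]; ring
  have et : t ^ (-(2*ε)) * (t ^ ((1:ℝ)/2))⁻¹ * (t ^ r)⁻¹ = t ^ (-(a+1) - 2*ε) := by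
    rw [← Real.rpow_neg ht.le, ← Real.rpow_neg ht.le, ← Real.rpow_add ht,
      ← Real.rpow_add ht]
    congr 1; rw [hr]; ring
  rw [Real.mul_rpow hs.le ht.le, Real.div_rpow hs.le ht.le,
    Real.sqrt_eq_rpow, Real.sqrt_eq_rpow, ← es, ← et]
  have h1 : s ^ ((1:ℝ)/2) ≠ 0 := by positivity
  have h2 : t ^ ((1:ℝ)/2) ≠ 0 := by positivity
  have h3 : t ^ r ≠ 0 := by positivity
  field_simp

theorem stmt_14 (a : ℝ) (ha : -1 < a) (ε : ℝ)
    (hε : 0 < ε ∧ ε < min (1 / 4) ((a + 1) / 2))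
    (φ θ : ℝ → ℝ) (c : ℝ) (hc : 1 ≤ c)
    (hφ : ∀ t ∈ Set.Ioc (0 : ℝ) 1, c⁻¹ * Real.sqrt t ≤ φ t ∧ φ t ≤ c * Real.sqrt t)
    (hθ : ∀ t ∈ Set.Ioc (0 : ℝ) 1, c⁻¹ * t ≤ θ t ∧ θ t ≤ c * t)
    (Kε : ℝ → ℝ → ℝ)
    (hKε : Kε = fun s t =>
      (θ s * θ t) ^ (-ε) / (φ s * φ t) ^ ((1 : ℝ) / 2) * (θ s / θ t) ^ (a / 2 + 1 / 4)) :
    (∫⁻ t in Set.Ioc (0 : ℝ) 1, ∫⁻ s in Set.Ioc (0 : ℝ) t,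
      ENNReal.ofReal ((Kε s t) ^ 2)) < ⊤ := by
  obtain ⟨hε0, hεlt⟩ := hε
  rw [lt_min_iff] at hεlt
  obtain ⟨hε4, hεa⟩ := hεlt
  have hc0 : (0:ℝ) < c := lt_of_lt_of_le one_pos hc
  set C : ℝ := (c^2) ^ (2*ε) * c^2 * (c^2) ^ |a + 1/2| with hCdef
  have hC : 0 ≤ C := by positivity
  set p : ℝ := a - 2*ε with hpdef
  set q : ℝ := -(a+1) - 2*ε with hqdef
  have hp : -1 < p := by rw [hpdef]; linarith
  have hp1 : 0 < p + 1 := by linarith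
  have hqp : -1 < q + (p+1) := by rw [hpdef, hqdef]; linarith
  -- inner bound for each t
  have inner_bound : ∀ t ∈ Set.Ioc (0:ℝ) 1,
      (∫⁻ s in Set.Ioc (0:ℝ) t, ENNReal.ofReal ((Kε s t) ^ 2)) ≤
        ENNReal.ofReal (C / (p+1) * t ^ (q + (p+1))) := by
    intro t ht
    obtain ⟨ht0, ht1⟩ := ht
    have step1 : (∫⁻ s in Set.Ioc (0:ℝ) t, ENNReal.ofReal ((Kε s t) ^ 2)) ≤
        ∫⁻ s in Set.Ioc (0:ℝ) t, ENNReal.ofReal (C * t ^ q) * ENNReal.ofReal (s ^ p) := by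
      apply setLIntegral_mono' measurableSet_Ioc
      intro s hs
      obtain ⟨hs0, hst⟩ := hs
      have hsI : s ∈ Set.Ioc (0:ℝ) 1 := ⟨hs0, hst.trans ht1⟩
      have htI : t ∈ Set.Ioc (0:ℝ) 1 := ⟨ht0, ht1⟩
      have hb := ptbound a ε c s t (θ s) (θ t) (φ s) (φ t) hc hε0 hs0 hst
        (hθ s hsI).1 (hθ s hsI).2 (hθ t htI).1 (hθ t htI).2 (hφ s hsI).1 (hφ t htI).1
      rw [← ENNReal.ofReal_mul (by positivity)]
      apply ENNReal.ofReal_le_ofReal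
      rw [hKε]
      calc ((θ s * θ t) ^ (-ε) / (φ s * φ t) ^ ((1:ℝ)/2) * (θ s / θ t) ^ (a/2 + 1/4)) ^ 2
          ≤ C * s ^ p * t ^ q := hb
        _ = C * t ^ q * s ^ p := by ring
    have step2 : (∫⁻ s in Set.Ioc (0:ℝ) t,
        ENNReal.ofReal (C * t ^ q) * ENNReal.ofReal (s ^ p)) =
        ENNReal.ofReal (C * t ^ q) * ENNReal.ofReal (t ^ (p+1) / (p+1)) := by
      rw [lintegral_const_mul' _ _ ENNReal.ofReal_ne_top, aux_lint p hp t ht0]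
    refine step1.trans_eq (step2.trans ?_)
    rw [← ENNReal.ofReal_mul (by positivity)]
    congr 1
    rw [Real.rpow_add ht0 q (p+1)]
    ring
  calc (∫⁻ t in Set.Ioc (0:ℝ) 1, ∫⁻ s in Set.Ioc (0:ℝ) t, ENNReal.ofReal ((Kε s t) ^ 2))
      ≤ ∫⁻ t in Set.Ioc (0:ℝ) 1,
          ENNReal.ofReal (C / (p+1)) * ENNReal.ofReal (t ^ (q + (p+1))) := by
        apply setLIntegral_mono' measurableSet_Ioc
        intro t ht
        rw [← ENNReal.ofReal_mul (by positivity)]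
        exact inner_bound t ht
    _ = ENNReal.ofReal (C / (p+1)) *
          ENNReal.ofReal ((1:ℝ) ^ (q + (p+1) + 1) / (q + (p+1) + 1)) := by
        rw [lintegral_const_mul' _ _ ENNReal.ofReal_ne_top, aux_lint _ hqp 1 one_pos]
    _ < ⊤ := ENNReal.mul_lt_top ENNReal.ofReal_lt_top ENNReal.ofReal_lt_top
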